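/- Let ũ_n(z) = ₚF_q(α₁+n, α₂,...,αₚ; γ₁,...,γ_q; z) and u_k(z) = z^k (d^k/dz^k) ₚF_q(α₁,...,αₚ; γ₁,...,γ_q; z). Then ũ_n(z) = Σ_{k=0}^n [C(n,k)/(α₁)_k] u_k(z), where C(n,k) is the binomial coefficient and (α₁)_k the Pochhammer symbol, provided α₁ is not a nonpositive integer. -/

import Mathlib

open PowerSeries Finset

/-- The Pochhammer symbol `(a)_k = a(a+1)⋯(a+k-1)`. -/
noncomputable def poch (a : ℂ) (k : ℕ) : ℂ := (ascPochhammer ℂ k).eval a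

/-- The `k`-th Maclaurin coefficient of `ₚF_q(α; γ; z)`. -/
noncomputable def hypCoeff {p q : ℕ} (α : Fin p → ℂ) (γ : Fin q → ℂ) (k : ℕ) : ℂ :=
  (∏ i, poch (α i) k) / ((∏ j, poch (γ j) k) * (k.factorial : ℂ))

/-- The generalized hypergeometric series `ₚF_q(α; γ; z)` as a formal power series. -/
noncomputable def hypSeries {p q : ℕ} (α : Fin p → ℂ) (γ : Fin q → ℂ) : PowerSeries ℂ :=
  PowerSeries.mk (hypCoeff α γ)

/-- `u_k(z) = z^k (d^k/dz^k) ₚF_q(α; γ; z)` as a formal power series. -/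
noncomputable def hypU {p q : ℕ} (α : Fin p → ℂ) (γ : Fin q → ℂ) (k : ℕ) : PowerSeries ℂ :=
  X ^ k * (fun f => derivative ℂ f)^[k] (hypSeries α γ)

lemma poch_zero (a : ℂ) : poch a 0 = 1 := by simp [poch]

lemma poch_succ (a : ℂ) (k : ℕ) : poch a (k + 1) = poch a k * (a + k) := by
  simp [poch, ascPochhammer_succ_eval]

lemma poch_ne_zero {a : ℂ} (ha : ∀ m : ℕ, a ≠ -(m : ℂ)) (k : ℕ) : poch a k ≠ 0 := by
  induction k with
  | zero => simp [poch_zero]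
  | succ k ih =>
    rw [poch_succ]
    refine mul_ne_zero ih fun h => ha k (by linear_combination h)

lemma poch_add (a : ℂ) (k t : ℕ) : poch a (k + t) = poch a k * poch (a + k) t := by
  have := congrArg (Polynomial.eval a) (ascPochhammer_mul ℂ k t)
  simpa [poch, Polynomial.eval_comp, add_comm] using this.symm

lemma poch_step (b : ℂ) (t : ℕ) :
    (t : ℂ) * poch (b + 1) (t - 1) = poch (b + 1) t - poch b t := by
  cases t with
  | zero => simp [poch_zero]
  | succ t =>
    have h1 : poch b (t + 1) = b * poch (b + 1) t := by
      have := congrArg (Polynomial.eval b) (ascPochhammer_succ_left ℂ t)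
      simpa [poch, Polynomial.eval_comp] using this
    rw [Nat.add_sub_cancel, poch_succ (b + 1) t, h1]
    push_cast
    ring

/-- Key combinatorial identity: `(a+n)_m = Σ_k C(n,k) m^(k) (a+k)_{m-k}`. -/
lemma poch_key (m : ℕ) : ∀ (n : ℕ) (a : ℂ),
    poch (a + n) m = ∑ k ∈ Finset.range (n + 1),
      (n.choose k : ℂ) * (m.descFactorial k : ℂ) * poch (a + k) (m - k) := by
  intro n
  induction n with
  | zero => intro a; simp
  | succ n ih =>
    intro a
    have hgf : ∀ k : ℕ,
        (((n+1).choose (k+1) : ℕ) : ℂ) * (m.descFactorial (k+1) : ℂ)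
            * poch (a + ((k+1 : ℕ) : ℂ)) (m - (k+1))
          = ((n.choose (k+1) : ℕ) : ℂ) * (m.descFactorial (k+1) : ℂ)
              * poch (a + ((k+1 : ℕ) : ℂ)) (m - (k+1))
            + ((n.choose k : ℂ) * (m.descFactorial k : ℂ) * poch ((a+1) + k) (m - k)
               - (n.choose k : ℂ) * (m.descFactorial k : ℂ) * poch (a + k) (m - k)) := by
      intro k
      have hd : ((m.descFactorial (k+1) : ℕ) : ℂ)
          = ((m - k : ℕ) : ℂ) * (m.descFactorial k : ℂ) := by
        rw [Nat.descFactorial_succ, Nat.cast_mul]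
      have hsub : m - (k + 1) = m - k - 1 := by omega
      have hstep := poch_step (a + k) (m - k)
      have h1 : a + ((k+1 : ℕ) : ℂ) = (a + k) + 1 := by push_cast; ring
      have h2 : (a + 1) + (k : ℂ) = (a + k) + 1 := by ring
      rw [Nat.choose_succ_succ, hsub, h1, h2, hd, Nat.cast_add]
      linear_combination ((n.choose k : ℂ) * (m.descFactorial k : ℂ)) * hstep
    rw [Finset.sum_range_succ' (fun k => (((n+1).choose k : ℕ) : ℂ)
      * (m.descFactorial k : ℂ) * poch (a + (k : ℂ)) (m - k)) (n+1)]
    have hrw : ∑ k ∈ Finset.range (n+1), (((n+1).choose (k+1) : ℕ) : ℂ)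
          * (m.descFactorial (k+1) : ℂ) * poch (a + ((k+1 : ℕ) : ℂ)) (m - (k+1))
        = (∑ k ∈ Finset.range (n+1), ((n.choose (k+1) : ℕ) : ℂ)
            * (m.descFactorial (k+1) : ℂ) * poch (a + ((k+1 : ℕ) : ℂ)) (m - (k+1)))
          + ((∑ k ∈ Finset.range (n+1), (n.choose k : ℂ) * (m.descFactorial k : ℂ)
              * poch ((a+1) + k) (m - k))
             - ∑ k ∈ Finset.range (n+1), (n.choose k : ℂ) * (m.descFactorial k : ℂ)
              * poch (a + k) (m - k)) := by
      rw [← Finset.sum_sub_distrib, ← Finset.sum_add_distrib]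
      exact Finset.sum_congr rfl fun k _ => hgf k
    have hA : ∑ k ∈ Finset.range (n+1), ((n.choose (k+1) : ℕ) : ℂ)
          * (m.descFactorial (k+1) : ℂ) * poch (a + ((k+1 : ℕ) : ℂ)) (m - (k+1))
        = poch (a + n) m
          - (n.choose 0 : ℂ) * (m.descFactorial 0 : ℂ) * poch (a + ((0 : ℕ) : ℂ)) (m - 0) := by
      rw [Finset.sum_range_succ]
      have hz : ((n.choose (n+1) : ℕ) : ℂ) = 0 := by
        rw [Nat.choose_succ_self, Nat.cast_zero]
      rw [hz, zero_mul, zero_mul, add_zero, ih a,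
        Finset.sum_range_succ' (fun k => (n.choose k : ℂ) * (m.descFactorial k : ℂ)
          * poch (a + (k : ℂ)) (m - k)) n]
      ring
    rw [hrw, hA, ← ih a, ← ih (a+1)]
    have hfin : a + ((n+1 : ℕ) : ℂ) = (a + 1) + (n : ℂ) := by push_cast; ring
    rw [hfin]
    simp [poch_zero]

lemma coeff_iter_deriv (F : PowerSeries ℂ) (k : ℕ) : ∀ j : ℕ,
    PowerSeries.coeff j ((fun f => derivative ℂ f)^[k] F)
      = ((j + k).descFactorial k : ℂ) * PowerSeries.coeff (j + k) F := by
  induction k with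
  | zero => intro j; simp
  | succ k ih =>
    intro j
    rw [Function.iterate_succ_apply']
    rw [PowerSeries.coeff_derivative, ih (j + 1)]
    have hd : (j + (k+1)).descFactorial (k+1) = (j + 1 + k).descFactorial k * (j + 1) := by
      have h1 : j + (k + 1) = j + 1 + k := by omega
      rw [h1, Nat.descFactorial_succ]
      have : j + 1 + k - k = j + 1 := by omega
      rw [this]; ring
    have h2 : j + 1 + k = j + (k + 1) := by omega
    rw [h2, hd]
    push_cast
    ring

/-- With `ũ_n(z) = ₚF_q(α₁+n, α₂,…,αₚ; γ; z)` and
`u_k(z) = z^k (d^k/dz^k) ₚF_q(α; γ; z)`, one has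
`ũ_n = Σ_{k=0}^n [C(n,k)/(α₁)_k] u_k`, provided `α₁` is not a nonpositive integer. -/
theorem hyp_shifted_eq_sum_hypU (p q n : ℕ) (α : Fin (p + 1) → ℂ) (γ : Fin q → ℂ)
    (hα : ∀ m : ℕ, α 0 ≠ -(m : ℂ)) (hγ : ∀ j, ∀ m : ℕ, γ j ≠ -(m : ℂ)) :
    hypSeries (Function.update α 0 (α 0 + (n : ℂ))) γ =
      ∑ k ∈ Finset.range (n + 1), ((n.choose k : ℂ) / poch (α 0) k) • hypU α γ k := by
  ext m
  rw [map_sum]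
  set D : ℂ := (∏ j, poch (γ j) m) * (m.factorial : ℂ) with hD
  have hDne : D ≠ 0 := by
    refine mul_ne_zero (Finset.prod_ne_zero_iff.mpr fun j _ => poch_ne_zero (hγ j) m) ?_
    exact_mod_cast Nat.factorial_ne_zero m
  set R : ℂ := ∏ i : Fin p, poch (α i.succ) m with hR
  -- LHS coefficient
  have hLHS : PowerSeries.coeff m (hypSeries (Function.update α 0 (α 0 + (n : ℂ))) γ)
      = poch (α 0 + n) m * R / D := by
    have hprod : (∏ i, poch (Function.update α 0 (α 0 + (n : ℂ)) i) m)
        = poch (α 0 + n) m * R := by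
      rw [Fin.prod_univ_succ, Function.update_self]
      congr 1
    rw [hypSeries, PowerSeries.coeff_mk, hypCoeff, hprod, ← hD]
  -- term-by-term
  have hterm : ∀ k, PowerSeries.coeff m (((n.choose k : ℂ) / poch (α 0) k) • hypU α γ k)
      = (n.choose k : ℂ) * (m.descFactorial k : ℂ) * poch (α 0 + k) (m - k) * (R / D) := by
    intro k
    rw [PowerSeries.coeff_smul, hypU, PowerSeries.coeff_X_pow_mul', smul_eq_mul]
    by_cases hkm : k ≤ m
    · rw [if_pos hkm, coeff_iter_deriv]
      have h1 : m - k + k = m := Nat.sub_add_cancel hkm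
      rw [h1, hypSeries, PowerSeries.coeff_mk, hypCoeff]
      have hprod : (∏ i, poch (α i) m) = poch (α 0) m * R := by
        rw [Fin.prod_univ_succ]
      rw [hprod, ← hD]
      have hsplitp : poch (α 0) m = poch (α 0) k * poch (α 0 + k) (m - k) := by
        conv_lhs => rw [← h1, add_comm (m - k) k, poch_add]
      rw [hsplitp]
      have hpk : poch (α 0) k ≠ 0 := poch_ne_zero hα k
      field_simp
    · rw [if_neg hkm]
      have : m.descFactorial k = 0 := Nat.descFactorial_eq_zero_iff_lt.mpr (by omega)
      rw [this]
      push_cast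
      ring
  rw [hLHS]
  calc poch (α 0 + n) m * R / D
      = (∑ k ∈ Finset.range (n + 1),
          (n.choose k : ℂ) * (m.descFactorial k : ℂ) * poch (α 0 + k) (m - k)) * (R / D) := by
        rw [← poch_key m n (α 0), mul_div_assoc]
    _ = ∑ k ∈ Finset.range (n + 1),
          (n.choose k : ℂ) * (m.descFactorial k : ℂ) * poch (α 0 + k) (m - k) * (R / D) := by
        rw [Finset.sum_mul]
    _ = ∑ k ∈ Finset.range (n + 1),
          PowerSeries.coeff m (((n.choose k : ℂ) / poch (α 0) k) • hypU α γ k) := by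
        refine Finset.sum_congr rfl fun k _ => (hterm k).symm
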